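/- Assume B is invertible and that (θᵢ, sᵢ, wᵢ) for i = 1, 2 satisfy the harmonic pencil equations with θᵢ ≠ 0, sᵢ ≠ 0 and θ₁² ≠ θ₂² (note wᵢ ≠ 0, since B wᵢ = θᵢ sᵢ ≠ 0 follows from the pencil equations and invertibility of B). Define the harmonic Ritz vectors ũᵢ = P sᵢ/‖sᵢ‖ and ṽᵢ = Q wᵢ/‖wᵢ‖. Then ũ₁ᵀ A ṽ₂ = 0 and ṽ₁ᵀ Aᵀ ũ₂ = 0. -/

import Mathlib

open Matrix

noncomputable def enorm {ι : Type*} [Fintype ι] (v : ι → ℝ) : ℝ :=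
  Real.sqrt (∑ i, v i ^ 2)

def eLast (m : ℕ) : Fin m → ℝ := fun i => if (i : ℕ) = m - 1 then 1 else 0

def HarmonicPencil {m : ℕ} (B : Matrix (Fin m) (Fin m) ℝ) (β θ : ℝ)
    (s w : Fin m → ℝ) : Prop :=
  θ • B.mulVec w = (B * Bᵀ + β ^ 2 • vecMulVec (eLast m) (eLast m)).mulVec s ∧
  θ • Bᵀ.mulVec s = (Bᵀ * B).mulVec w

noncomputable def specNorm {m n : Type*} [Fintype m] [Fintype n] [DecidableEq n]
    (A : Matrix m n ℝ) : ℝ :=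
  ‖LinearMap.toContinuousLinearMap (Matrix.toEuclideanLin A)‖

noncomputable def sep {n : Type*} [Fintype n] [DecidableEq n] (a : ℝ) (G : Matrix n n ℝ) : ℝ :=
  sInf {r | ∃ x : n → ℝ, _root_.enorm x = 1 ∧ r = _root_.enorm ((a • (1 : Matrix n n ℝ) - G).mulVec x)}

noncomputable def sigmaMin {m n : Type*} [Fintype m] [Fintype n] (C : Matrix m n ℝ) : ℝ :=
  sSup {c | 0 ≤ c ∧ ∀ h, c * _root_.enorm h ≤ _root_.enorm (C.mulVec h)}

noncomputable def sinAngleVec {ι : Type*} [Fintype ι] (x y : ι → ℝ) : ℝ :=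
  Real.sqrt (1 - (x ⬝ᵥ y) ^ 2 / (_root_.enorm x ^ 2 * _root_.enorm y ^ 2))

noncomputable def toE {ι : Type*} (v : ι → ℝ) : EuclideanSpace ℝ ι :=
  (WithLp.equiv 2 (ι → ℝ)).symm v

noncomputable def ofE {ι : Type*} (v : EuclideanSpace ℝ ι) : ι → ℝ :=
  WithLp.equiv 2 (ι → ℝ) v

noncomputable def sinAngleSub {ι : Type*} [Fintype ι] (x : EuclideanSpace ℝ ι)
    (E : Submodule ℝ (EuclideanSpace ℝ ι)) : ℝ :=
  ‖x - (E.orthogonalProjectionOnto x : EuclideanSpace ℝ ι)‖ / ‖x‖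

def Atilde {M N : ℕ} (A : Matrix (Fin M) (Fin N) ℝ) :
    Matrix (Fin M ⊕ Fin N) (Fin M ⊕ Fin N) ℝ :=
  fromBlocks 0 A Aᵀ 0

def Btilde {m : ℕ} (B : Matrix (Fin m) (Fin m) ℝ) :
    Matrix (Fin m ⊕ Fin m) (Fin m ⊕ Fin m) ℝ :=
  fromBlocks 0 B Bᵀ 0

noncomputable def Ctilde {m : ℕ} (B : Matrix (Fin m) (Fin m) ℝ) (β : ℝ) :
    Matrix (Fin m ⊕ Fin m) (Fin m ⊕ Fin m) ℝ :=
  fromBlocks (B * Bᵀ + β ^ 2 • vecMulVec (eLast m) (eLast m)) 0 0 (Bᵀ * B)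

noncomputable def colSpanE {M N m : ℕ} (P : Matrix (Fin M) (Fin m) ℝ)
    (Q : Matrix (Fin N) (Fin m) ℝ) : Submodule ℝ (EuclideanSpace ℝ (Fin M ⊕ Fin N)) :=
  Submodule.span ℝ {z | ∃ x y : Fin m → ℝ, z = toE (Sum.elim (P.mulVec x) (Q.mulVec y))}

noncomputable def Mrho {m : ℕ} (B : Matrix (Fin m) (Fin m) ℝ) (β ρ : ℝ) :
    Matrix ((Fin m ⊕ Fin m) ⊕ Unit) (Fin m ⊕ Fin m) ℝ :=
  Matrix.fromRows
    (fromBlocks (-(ρ • (1 : Matrix (Fin m) (Fin m) ℝ))) B Bᵀ (-(ρ • 1)))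
    (Matrix.of fun (_ : Unit) j => Sum.elim (β • eLast m) (0 : Fin m → ℝ) j)


lemma dot_tr {k l : Type*} [Fintype k] [Fintype l] (M : Matrix k l ℝ) (x : l → ℝ) (y : k → ℝ) :
    x ⬝ᵥ Mᵀ.mulVec y = M.mulVec x ⬝ᵥ y := by
  rw [Matrix.dotProduct_mulVec, Matrix.vecMul_transpose]

lemma pencil_orth (m : ℕ) (B : Matrix (Fin m) (Fin m) ℝ) (β θ₁ θ₂ : ℝ)
    (e : Fin m → ℝ) (s₁ w₁ s₂ w₂ : Fin m → ℝ)
    (h11 : θ₁ • B.mulVec w₁ = (B * Bᵀ + β ^ 2 • vecMulVec e e).mulVec s₁)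
    (h12 : θ₁ • Bᵀ.mulVec s₁ = (Bᵀ * B).mulVec w₁)
    (h21 : θ₂ • B.mulVec w₂ = (B * Bᵀ + β ^ 2 • vecMulVec e e).mulVec s₂)
    (h22 : θ₂ • Bᵀ.mulVec s₂ = (Bᵀ * B).mulVec w₂)
    (hθ2 : θ₂ ≠ 0) (hθ : θ₁ ^ 2 ≠ θ₂ ^ 2) :
    s₁ ⬝ᵥ B.mulVec w₂ = 0 ∧ s₂ ⬝ᵥ B.mulVec w₁ = 0 := by
  set C₁ := B * Bᵀ + β ^ 2 • vecMulVec e e with hC₁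
  have hC1t : C₁ᵀ = C₁ := by
    ext i j
    simp [hC₁, Matrix.transpose_apply, Matrix.add_apply, Matrix.mul_apply,
      Matrix.vecMulVec_apply, mul_comm]
  set a := s₂ ⬝ᵥ B.mulVec w₁ with ha
  set b := s₁ ⬝ᵥ B.mulVec w₂ with hb
  have E1 : θ₁ * a = s₂ ⬝ᵥ C₁.mulVec s₁ := by
    have := congrArg (fun v => s₂ ⬝ᵥ v) h11
    simpa [dotProduct_smul] using this
  have E2 : θ₂ * b = s₁ ⬝ᵥ C₁.mulVec s₂ := by
    have := congrArg (fun v => s₁ ⬝ᵥ v) h21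
    simpa [dotProduct_smul] using this
  have sym1 : s₂ ⬝ᵥ C₁.mulVec s₁ = s₁ ⬝ᵥ C₁.mulVec s₂ := by
    conv_lhs => rw [← hC1t, dot_tr, dotProduct_comm]
  have E3 : θ₁ * b = w₂ ⬝ᵥ (Bᵀ * B).mulVec w₁ := by
    have := congrArg (fun v => w₂ ⬝ᵥ v) h12
    have hb' : w₂ ⬝ᵥ Bᵀ.mulVec s₁ = b := by rw [dot_tr, dotProduct_comm]
    simpa [dotProduct_smul, hb'] using this
  have E4 : θ₂ * a = w₁ ⬝ᵥ (Bᵀ * B).mulVec w₂ := by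
    have := congrArg (fun v => w₁ ⬝ᵥ v) h22
    have ha' : w₁ ⬝ᵥ Bᵀ.mulVec s₂ = a := by rw [dot_tr, dotProduct_comm]
    simpa [dotProduct_smul, ha'] using this
  have hC2t : (Bᵀ * B)ᵀ = Bᵀ * B := by simp [Matrix.transpose_mul]
  have sym2 : w₂ ⬝ᵥ (Bᵀ * B).mulVec w₁ = w₁ ⬝ᵥ (Bᵀ * B).mulVec w₂ := by
    conv_lhs => rw [← hC2t, dot_tr, dotProduct_comm]
  have k1 : θ₁ * a = θ₂ * b := by rw [E1, sym1, ← E2]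
  have k2 : θ₁ * b = θ₂ * a := by rw [E3, sym2, ← E4]
  have ha0 : a = 0 := by
    have : (θ₁ ^ 2 - θ₂ ^ 2) * a = 0 := by linear_combination θ₁ * k1 + θ₂ * k2
    rcases mul_eq_zero.1 this with h | h
    · exact absurd (sub_eq_zero.1 h) hθ
    · exact h
  have hb0 : b = 0 := by
    have := k1
    rw [ha0, mul_zero] at this
    exact (mul_eq_zero.1 this.symm).resolve_left hθ2
  exact ⟨hb0, ha0⟩

theorem stmt2 (m M N : ℕ) (hm : 0 < m)
    (A : Matrix (Fin M) (Fin N) ℝ)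
    (P : Matrix (Fin M) (Fin m) ℝ) (Q : Matrix (Fin N) (Fin m) ℝ)
    (hP : Pᵀ * P = 1) (hQ : Qᵀ * Q = 1)
    (B : Matrix (Fin m) (Fin m) ℝ) (hPAQ : Pᵀ * A * Q = B) (hB : IsUnit B)
    (β θ₁ θ₂ : ℝ) (s₁ w₁ s₂ w₂ : Fin m → ℝ)
    (h1 : HarmonicPencil B β θ₁ s₁ w₁) (h2 : HarmonicPencil B β θ₂ s₂ w₂)
    (hθ1 : θ₁ ≠ 0) (hθ2 : θ₂ ≠ 0) (hs1 : s₁ ≠ 0) (hs2 : s₂ ≠ 0)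
    (hθ : θ₁ ^ 2 ≠ θ₂ ^ 2) :
    ((_root_.enorm s₁)⁻¹ • P.mulVec s₁) ⬝ᵥ A.mulVec ((_root_.enorm w₂)⁻¹ • Q.mulVec w₂) = 0 ∧
    ((_root_.enorm w₁)⁻¹ • Q.mulVec w₁) ⬝ᵥ Aᵀ.mulVec ((_root_.enorm s₂)⁻¹ • P.mulVec s₂) = 0 := by
  obtain ⟨hb0, ha0⟩ := pencil_orth m B β θ₁ θ₂ (eLast m) s₁ w₁ s₂ w₂
    h1.1 h1.2 h2.1 h2.2 hθ2 hθ
  have key1 : P.mulVec s₁ ⬝ᵥ A.mulVec (Q.mulVec w₂) = s₁ ⬝ᵥ B.mulVec w₂ := by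
    calc P.mulVec s₁ ⬝ᵥ A.mulVec (Q.mulVec w₂)
        = s₁ ⬝ᵥ Pᵀ.mulVec (A.mulVec (Q.mulVec w₂)) := (dot_tr P s₁ _).symm
      _ = s₁ ⬝ᵥ B.mulVec w₂ := by
          rw [Matrix.mulVec_mulVec, Matrix.mulVec_mulVec, hPAQ]
  have hBT : Qᵀ * Aᵀ * P = Bᵀ := by
    rw [← hPAQ]; simp [Matrix.transpose_mul, Matrix.mul_assoc]
  have key2 : Q.mulVec w₁ ⬝ᵥ Aᵀ.mulVec (P.mulVec s₂) = s₂ ⬝ᵥ B.mulVec w₁ := by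
    calc Q.mulVec w₁ ⬝ᵥ Aᵀ.mulVec (P.mulVec s₂)
        = w₁ ⬝ᵥ Qᵀ.mulVec (Aᵀ.mulVec (P.mulVec s₂)) := (dot_tr Q w₁ _).symm
      _ = w₁ ⬝ᵥ Bᵀ.mulVec s₂ := by
          rw [Matrix.mulVec_mulVec, Matrix.mulVec_mulVec, hBT]
      _ = s₂ ⬝ᵥ B.mulVec w₁ := by rw [dot_tr, dotProduct_comm]
  constructor
  · rw [Matrix.mulVec_smul, smul_dotProduct, dotProduct_smul,
      key1, hb0]
    simp
  · rw [Matrix.mulVec_smul, smul_dotProduct, dotProduct_smul,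
      key2, ha0]
    simp
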